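/- arXiv:2501.06147 — 2 statements merged into one kernel-verified Lean document; each statement's English description precedes it below -/
import Mathlib

section
/- Let s ≥ 0. There exists a constant C = C(s) > 0 such that for all ε ∈ (0,1], all t ≥ 0, all real N ≥ 1, and all finitely supported sequences a, b, c : ℤ → ℂ, the sequence G defined by G_k = Σ k·(k1+k2)·exp(−i·t·Q2(k,k1,k2,k3))/(Q1(k,k1+k2,k3)·Q2(k,k1,k2,k3))·a(k1)·b(k2)·c(k3), where the sum ranges over all (k1,k2,k3) ∈ Γ(k) with k1 ≠ 0, k2 ≠ 0, k3 ≠ 0, and where Q1(k,m,n) = 3k·m·n + iε(k² − m² − n²) (for k = m + n) and Q2(k,k1,k2,k3) = 3(k1+k2)(k1+k3)(k2+k3) + iε(k² − k1² − k2² − k3²), satisfies (Σ_{|k|>N} (1+k²)^s e^{−2tεk²} |G_k|²)^{1/2} ≤ C·N^{−1}·‖(e^{−tεk²}a_k)_{k∈ℤ}‖_{H^s}·‖(e^{−tεk²}b_k)_{k∈ℤ}‖_{H^s}·‖(e^{−tεk²}c_k)_{k∈ℤ}‖_{H^s}. -/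
open scoped ENNReal
open MeasureTheory

/-- The `H^s` norm of a sequence indexed by `ℤ`, with values in `[0,∞]`. -/
noncomputable def HsE (s : ℝ) (a : ℤ → ℝ≥0∞) : ℝ≥0∞ :=
  (∑' k : ℤ, ENNReal.ofReal ((1 + (k : ℝ) ^ 2) ^ s) * a k ^ 2) ^ (1 / 2 : ℝ)

/-- `Q1(k, m, n) = 3 k m n + i ε (k² - m² - n²)`. -/
noncomputable def Q1 (ε : ℝ) (k m n : ℤ) : ℂ :=
  3 * (k : ℂ) * (m : ℂ) * (n : ℂ) +
    Complex.I * (ε : ℂ) * ((k : ℂ) ^ 2 - (m : ℂ) ^ 2 - (n : ℂ) ^ 2)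

/-- `Q2(k, k1, k2, k3) = 3 (k1+k2)(k1+k3)(k2+k3) + i ε (k² - k1² - k2² - k3²)`. -/
noncomputable def Q2 (ε : ℝ) (k k1 k2 k3 : ℤ) : ℂ :=
  3 * ((k1 + k2 : ℤ) : ℂ) * ((k1 + k3 : ℤ) : ℂ) * ((k2 + k3 : ℤ) : ℂ) +
    Complex.I * (ε : ℂ) * ((k : ℂ) ^ 2 - (k1 : ℂ) ^ 2 - (k2 : ℂ) ^ 2 - (k3 : ℂ) ^ 2)

/- ### Auxiliary lemmas -/

lemma tsum_cs {ι : Type*} [MeasurableSpace ι] [MeasurableSingletonClass ι] [Countable ι]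
    (f g : ι → ℝ≥0∞) :
    (∑' i, f i * g i) ^ 2 ≤ (∑' i, f i ^ 2) * (∑' i, g i ^ 2) := by
  have hpq : Real.HolderConjugate 2 2 := by
    constructor <;> norm_num
  have h := ENNReal.lintegral_mul_le_Lp_mul_Lq (Measure.count (α := ι)) hpq
    (Measurable.of_discrete.aemeasurable (f := f)) (Measurable.of_discrete.aemeasurable (f := g))
  simp only [lintegral_count] at h
  calc (∑' i, f i * g i) ^ 2
      ≤ ((∑' i, f i ^ (2:ℝ)) ^ (1/2 : ℝ) * (∑' i, g i ^ (2:ℝ)) ^ (1/2:ℝ)) ^ 2 := by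
        exact pow_le_pow_left₀ zero_le h 2
    _ = (∑' i, f i ^ 2) * (∑' i, g i ^ 2) := by
        rw [mul_pow, ← ENNReal.rpow_natCast (_ ^ (1/2:ℝ)), ← ENNReal.rpow_natCast (_ ^ (1/2:ℝ)),
          ← ENNReal.rpow_mul, ← ENNReal.rpow_mul]
        norm_num

noncomputable def gE : ℤ → ℝ≥0∞ := fun n => ENNReal.ofReal (1/(n:ℝ)^2)
noncomputable def SE : ℝ≥0∞ := ∑' n : ℤ, gE n
noncomputable def Sv : ℝ := ∑' n : ℤ, 1/(n:ℝ)^2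

lemma Ssummable : Summable (fun n : ℤ => 1/(n:ℝ)^2) :=
  Real.summable_one_div_int_pow.mpr one_lt_two

lemma SE_eq : SE = ENNReal.ofReal Sv :=
  (ENNReal.ofReal_tsum_of_nonneg (fun n => by positivity) Ssummable).symm

lemma Sv_pos : 0 < Sv := by
  have h2 := Summable.le_tsum Ssummable 1 (fun n _ => by positivity)
  norm_num at h2
  have h3 : Sv = ∑' (i : ℤ), ((i:ℝ) ^ 2)⁻¹ := by
    unfold Sv; congr 1; ext n; rw [one_div]
  rw [h3]
  exact lt_of_lt_of_le one_pos h2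

lemma gE_shift (k : ℤ) : ∑' n : ℤ, gE (k - n) = SE :=
  (Equiv.subLeft k).tsum_eq gE

lemma sum_g (k : ℤ) (c : ℝ≥0∞) :
    ∑' p : ℤ × ℤ × ℤ, c * gE (k - p.1) * gE (k - p.2.1) *
      (if p.2.2 = k - p.1 - p.2.1 then 1 else 0) = c * SE * SE := by
  rw [ENNReal.tsum_prod']
  have h1 : ∀ x : ℤ, ∑' q : ℤ × ℤ, (c * gE (k - x) * gE (k - q.1) *
      (if q.2 = k - x - q.1 then 1 else 0)) = c * gE (k - x) * SE := by
    intro x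
    rw [ENNReal.tsum_prod']
    have h2 : ∀ y : ℤ, ∑' z : ℤ, (c * gE (k - x) * gE (k - y) *
        (if z = k - x - y then 1 else 0)) = c * gE (k - x) * gE (k - y) := by
      intro y
      simp only [mul_ite, mul_one, mul_zero]
      exact tsum_ite_eq _ _
    simp only [h2]
    rw [ENNReal.tsum_mul_left, gE_shift]
  simp only [h1]
  calc ∑' x : ℤ, c * gE (k - x) * SE = ∑' x : ℤ, c * SE * gE (k - x) := by
        congr 1; ext x; ring
    _ = c * SE * SE := by rw [ENNReal.tsum_mul_left, gE_shift]

lemma tsum_triple (u v w : ℤ → ℝ≥0∞) :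
    ∑' p : ℤ × ℤ × ℤ, u p.1 * v p.2.1 * w p.2.2
      = (∑' x : ℤ, u x) * (∑' y : ℤ, v y) * (∑' z : ℤ, w z) := by
  rw [ENNReal.tsum_prod']
  have h1 : ∀ x : ℤ, ∑' q : ℤ × ℤ, (u x * v q.1 * w q.2)
      = u x * ((∑' y : ℤ, v y) * (∑' z : ℤ, w z)) := by
    intro x
    rw [ENNReal.tsum_prod']
    simp only [mul_assoc, ENNReal.tsum_mul_left]
    rw [ENNReal.tsum_mul_right]
  simp only [h1]
  rw [ENNReal.tsum_mul_right, mul_assoc]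

lemma sq_rpow_half (Z : ℝ≥0∞) : (Z ^ 2) ^ (1/2 : ℝ) = Z := by
  rw [← ENNReal.rpow_natCast Z 2, ← ENNReal.rpow_mul]
  norm_num

lemma tsum_delta_k (v : ℤ) (X : ℝ≥0∞) : ∑' k : ℤ, (if v = k then X else 0) = X := by
  rw [tsum_eq_single v]
  · simp
  · intro k hk; simp [Ne.symm hk]

lemma Q1_lb (ε : ℝ) (k m n : ℤ) : 3 * |(k:ℝ)| * |(m:ℝ)| * |(n:ℝ)| ≤ norm (Q1 ε k m n) := by
  have hre : (Q1 ε k m n).re = 3 * (k:ℝ) * m * n := by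
    simp [Q1, pow_two]
  calc 3 * |(k:ℝ)| * |(m:ℝ)| * |(n:ℝ)| = |(Q1 ε k m n).re| := by
        rw [hre, abs_mul, abs_mul, abs_mul]; norm_num
    _ ≤ norm (Q1 ε k m n) := Complex.abs_re_le_norm _

lemma Q2_lb (ε : ℝ) (k k1 k2 k3 : ℤ) :
    3 * |((k1+k2:ℤ):ℝ)| * |((k1+k3:ℤ):ℝ)| * |((k2+k3:ℤ):ℝ)| ≤ norm (Q2 ε k k1 k2 k3) := by
  have hre : (Q2 ε k k1 k2 k3).re = 3 * ((k1+k2:ℤ):ℝ) * ((k1+k3:ℤ):ℝ) * ((k2+k3:ℤ):ℝ) := by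
    simp [Q2, pow_two]
  calc 3 * |((k1+k2:ℤ):ℝ)| * |((k1+k3:ℤ):ℝ)| * |((k2+k3:ℤ):ℝ)| = |(Q2 ε k k1 k2 k3).re| := by
        rw [hre, abs_mul, abs_mul, abs_mul]; norm_num
    _ ≤ norm (Q2 ε k k1 k2 k3) := Complex.abs_re_le_norm _

lemma exp_abs' (ε t : ℝ) (k k1 k2 k3 : ℤ) :
    norm (Complex.exp (-(Complex.I * (t:ℂ) * Q2 ε k k1 k2 k3)))
      = Real.exp (t * ε * ((k:ℝ)^2 - (k1:ℝ)^2 - (k2:ℝ)^2 - (k3:ℝ)^2)) := by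
  rw [Complex.norm_exp]
  congr 1
  simp [Q2, Complex.mul_re, Complex.mul_im, pow_two]
  ring

lemma weight_bound (s : ℝ) (hs : 0 ≤ s) (k1 k2 k3 : ℤ) :
    (1 + ((k1+k2+k3 : ℤ):ℝ)^2) ^ (s/2) ≤
      3 ^ (s/2) * ((1 + (k1:ℝ)^2)^(s/2) * ((1 + (k2:ℝ)^2)^(s/2) * (1 + (k3:ℝ)^2)^(s/2))) := by
  have h1 : (0:ℝ) ≤ 1 + ((k1+k2+k3 : ℤ):ℝ)^2 := by positivity
  have hbase : 1 + ((k1+k2+k3:ℤ):ℝ)^2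
      ≤ 3 * ((1 + (k1:ℝ)^2) * ((1 + (k2:ℝ)^2) * (1 + (k3:ℝ)^2))) := by
    push_cast
    nlinarith [sq_nonneg ((k1:ℝ)-k2), sq_nonneg ((k1:ℝ)-k3), sq_nonneg ((k2:ℝ)-k3),
      sq_nonneg ((k1:ℝ)*k2), sq_nonneg ((k1:ℝ)*k3), sq_nonneg ((k2:ℝ)*k3),
      sq_nonneg ((k1:ℝ)*k2*k3), sq_nonneg ((k1:ℝ)+k2+k3)]
  calc (1 + ((k1+k2+k3 : ℤ):ℝ)^2) ^ (s/2)
      ≤ (3 * ((1 + (k1:ℝ)^2) * ((1 + (k2:ℝ)^2) * (1 + (k3:ℝ)^2))))^(s/2) :=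
        Real.rpow_le_rpow h1 hbase (by linarith)
    _ = 3 ^ (s/2) * ((1 + (k1:ℝ)^2)^(s/2) * ((1 + (k2:ℝ)^2)^(s/2) * (1 + (k3:ℝ)^2)^(s/2))) := by
        rw [Real.mul_rpow (by norm_num) (by positivity),
          Real.mul_rpow (by positivity) (by positivity),
          Real.mul_rpow (by positivity) (by positivity)]

lemma term_bound (s : ℝ) (hs : 0 ≤ s) (ε t : ℝ) (k k1 k2 k3 : ℤ)
    (hk : k ≠ 0) (hsum : k1 + k2 + k3 = k) (h12 : k1 + k2 ≠ 0) (h13 : k1 + k3 ≠ 0)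
    (h23 : k2 + k3 ≠ 0) (h3 : k3 ≠ 0) (za zb zc : ℂ) :
    (1 + (k:ℝ)^2)^(s/2) * Real.exp (-(t*ε*(k:ℝ)^2)) *
      norm ((k : ℂ) * ((k1 + k2 : ℤ) : ℂ) *
          Complex.exp (-(Complex.I * (t : ℂ) * Q2 ε k k1 k2 k3)) /
          (Q1 ε k (k1 + k2) k3 * Q2 ε k k1 k2 k3) * za * zb * zc)
    ≤ 3^(s/2)/9 *
        (1/(|((k2+k3:ℤ):ℝ)| * |((k1+k3:ℤ):ℝ)| * |((k1+k2:ℤ):ℝ)| * |((k3:ℤ):ℝ)|)) *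
      ((1 + (k1:ℝ)^2)^(s/2) * (Real.exp (-(t*ε*(k1:ℝ)^2)) * norm za)) *
      ((1 + (k2:ℝ)^2)^(s/2) * (Real.exp (-(t*ε*(k2:ℝ)^2)) * norm zb)) *
      ((1 + (k3:ℝ)^2)^(s/2) * (Real.exp (-(t*ε*(k3:ℝ)^2)) * norm zc)) := by
  have hkR : |(k:ℝ)| ≠ 0 := by
    simp only [ne_eq, abs_eq_zero, Int.cast_eq_zero]; exact hk
  have h12R : (0:ℝ) < |((k1+k2:ℤ):ℝ)| := abs_pos.mpr (by exact_mod_cast h12)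
  have h13R : (0:ℝ) < |((k1+k3:ℤ):ℝ)| := abs_pos.mpr (by exact_mod_cast h13)
  have h23R : (0:ℝ) < |((k2+k3:ℤ):ℝ)| := abs_pos.mpr (by exact_mod_cast h23)
  have h3R : (0:ℝ) < |((k3:ℤ):ℝ)| := abs_pos.mpr (by exact_mod_cast h3)
  have hkpos : (0:ℝ) < |(k:ℝ)| := abs_pos.mpr (by exact_mod_cast hk)
  set E := Real.exp (t * ε * ((k:ℝ)^2 - (k1:ℝ)^2 - (k2:ℝ)^2 - (k3:ℝ)^2)) with hE
  have hEpos : 0 < E := Real.exp_pos _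
  set P := |((k2+k3:ℤ):ℝ)| * |((k1+k3:ℤ):ℝ)| * |((k1+k2:ℤ):ℝ)| * |((k3:ℤ):ℝ)| with hP
  have hPpos : 0 < P := by positivity
  have hQ1pos : (0:ℝ) < 3 * |(k:ℝ)| * |((k1+k2:ℤ):ℝ)| * |((k3:ℤ):ℝ)| := by positivity
  have hQ2pos : (0:ℝ) < 3 * |((k1+k2:ℤ):ℝ)| * |((k1+k3:ℤ):ℝ)| * |((k2+k3:ℤ):ℝ)| := by positivity
  have habs : norm ((k : ℂ) * ((k1 + k2 : ℤ) : ℂ) *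
          Complex.exp (-(Complex.I * (t : ℂ) * Q2 ε k k1 k2 k3)) /
          (Q1 ε k (k1 + k2) k3 * Q2 ε k k1 k2 k3) * za * zb * zc)
      ≤ E / (9 * P) * (norm za * norm zb * norm zc) := by
    rw [norm_mul, norm_mul, norm_mul, norm_div, norm_mul, norm_mul, norm_mul, exp_abs',
      Complex.norm_intCast, Complex.norm_intCast]
    have hd : (3 * |(k:ℝ)| * |((k1+k2:ℤ):ℝ)| * |((k3:ℤ):ℝ)|) *
          (3 * |((k1+k2:ℤ):ℝ)| * |((k1+k3:ℤ):ℝ)| * |((k2+k3:ℤ):ℝ)|)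
        ≤ norm (Q1 ε k (k1+k2) k3) * norm (Q2 ε k k1 k2 k3) :=
      mul_le_mul (Q1_lb ε k (k1+k2) k3) (Q2_lb ε k k1 k2 k3) (le_of_lt hQ2pos)
        (norm_nonneg _)
    have hfrac : |(k:ℝ)| * |((k1+k2:ℤ):ℝ)| *
          Real.exp (t * ε * ((k:ℝ)^2 - (k1:ℝ)^2 - (k2:ℝ)^2 - (k3:ℝ)^2)) /
          (norm (Q1 ε k (k1+k2) k3) * norm (Q2 ε k k1 k2 k3))
        ≤ E / (9 * P) := by
      rw [← hE]
      calc |(k:ℝ)| * |((k1+k2:ℤ):ℝ)| * E /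
            (norm (Q1 ε k (k1+k2) k3) * norm (Q2 ε k k1 k2 k3))
          ≤ |(k:ℝ)| * |((k1+k2:ℤ):ℝ)| * E /
            ((3 * |(k:ℝ)| * |((k1+k2:ℤ):ℝ)| * |((k3:ℤ):ℝ)|) *
              (3 * |((k1+k2:ℤ):ℝ)| * |((k1+k3:ℤ):ℝ)| * |((k2+k3:ℤ):ℝ)|)) :=
            div_le_div_of_nonneg_left (by positivity) (by positivity) hd
        _ = E / (9 * P) := by
            rw [hP, div_eq_div_iff (by positivity) (by positivity)]
            ring
    have hstep := mul_le_mul_of_nonneg_right (mul_le_mul_of_nonneg_right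
      (mul_le_mul_of_nonneg_right hfrac (norm_nonneg za)) (norm_nonneg zb))
      (norm_nonneg zc)
    exact le_trans hstep (le_of_eq (by ring))
  have hexp : Real.exp (-(t*ε*(k:ℝ)^2)) * E
      = Real.exp (-(t*ε*(k1:ℝ)^2)) * Real.exp (-(t*ε*(k2:ℝ)^2)) * Real.exp (-(t*ε*(k3:ℝ)^2)) := by
    rw [hE, ← Real.exp_add, ← Real.exp_add, ← Real.exp_add]
    ring_nf
  have hW := weight_bound s hs k1 k2 k3
  rw [hsum] at hW
  calc (1 + (k:ℝ)^2)^(s/2) * Real.exp (-(t*ε*(k:ℝ)^2)) * norm _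
      ≤ (1 + (k:ℝ)^2)^(s/2) * Real.exp (-(t*ε*(k:ℝ)^2)) *
          (E / (9 * P) * (norm za * norm zb * norm zc)) := by
        gcongr
    _ = (1 + (k:ℝ)^2)^(s/2) * (Real.exp (-(t*ε*(k:ℝ)^2)) * E) * (1/(9*P)) *
          (norm za * norm zb * norm zc) := by ring
    _ ≤ (3 ^ (s/2) * ((1 + (k1:ℝ)^2)^(s/2) * ((1 + (k2:ℝ)^2)^(s/2) * (1 + (k3:ℝ)^2)^(s/2)))) *
          (Real.exp (-(t*ε*(k:ℝ)^2)) * E) * (1/(9*P)) *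
          (norm za * norm zb * norm zc) := by
        gcongr
        all_goals first | exact hW | positivity
    _ = _ := by
        rw [hexp, hP]
        ring

lemma Fsq_bound (N : ℝ) (hN : 1 ≤ N) (k k1 k2 k3 : ℤ) (hk : N < |(k:ℝ)|)
    (hsum : k1 + k2 + k3 = k) (h12 : k1 + k2 ≠ 0) (h13 : k1 + k3 ≠ 0)
    (h23 : k2 + k3 ≠ 0) (h3 : k3 ≠ 0) :
    (1/(|((k2+k3:ℤ):ℝ)| * |((k1+k3:ℤ):ℝ)| * |((k1+k2:ℤ):ℝ)| * |((k3:ℤ):ℝ)|))^2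
      ≤ 4/N^2 * (1/((k2+k3:ℤ):ℝ)^2 * (1/((k1+k3:ℤ):ℝ)^2)) := by
  have hNpos : (0:ℝ) < N := lt_of_lt_of_le one_pos hN
  have h12one : (1:ℝ) ≤ |((k1+k2:ℤ):ℝ)| := by
    rw [← Int.cast_abs]
    exact_mod_cast Int.one_le_abs h12
  have h3one : (1:ℝ) ≤ |((k3:ℤ):ℝ)| := by
    rw [← Int.cast_abs]
    exact_mod_cast Int.one_le_abs h3
  have h13R : (0:ℝ) < |((k1+k3:ℤ):ℝ)| := abs_pos.mpr (by exact_mod_cast h13)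
  have h23R : (0:ℝ) < |((k2+k3:ℤ):ℝ)| := abs_pos.mpr (by exact_mod_cast h23)
  have htri : |(k:ℝ)| ≤ |((k1+k2:ℤ):ℝ)| + |((k3:ℤ):ℝ)| := by
    have : (k:ℝ) = ((k1+k2:ℤ):ℝ) + ((k3:ℤ):ℝ) := by
      push_cast
      have : k1 + k2 + k3 = k := hsum
      push_cast [← this]
      ring
    rw [this]
    exact abs_add_le _ _
  have hx : N/2 ≤ |((k1+k2:ℤ):ℝ)| * |((k3:ℤ):ℝ)| := by
    rcases le_or_gt (N/2) |((k1+k2:ℤ):ℝ)| with h | h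
    · nlinarith
    · have h3big : N/2 ≤ |((k3:ℤ):ℝ)| := by nlinarith
      nlinarith
  have hq : (1:ℝ)/(|((k1+k2:ℤ):ℝ)| * |((k3:ℤ):ℝ)|)^2 ≤ 4/N^2 := by
    rw [div_le_div_iff₀ (by positivity) (by positivity)]
    nlinarith
  calc (1/(|((k2+k3:ℤ):ℝ)| * |((k1+k3:ℤ):ℝ)| * |((k1+k2:ℤ):ℝ)| * |((k3:ℤ):ℝ)|))^2
      = 1/|((k2+k3:ℤ):ℝ)|^2 * (1/|((k1+k3:ℤ):ℝ)|^2) *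
          (1/(|((k1+k2:ℤ):ℝ)| * |((k3:ℤ):ℝ)|)^2) := by
        simp only [mul_pow, one_div, mul_inv]
        ring
    _ ≤ 1/|((k2+k3:ℤ):ℝ)|^2 * (1/|((k1+k3:ℤ):ℝ)|^2) * (4/N^2) := by
        gcongr
    _ = 4/N^2 * (1/((k2+k3:ℤ):ℝ)^2 * (1/((k1+k3:ℤ):ℝ)^2)) := by
        rw [sq_abs, sq_abs]
        ring

/- ### new stuff -/

/-- The condition on the triple. -/
def Cnd (k : ℤ) (p : ℤ × ℤ × ℤ) : Prop :=
  p.1 + p.2.1 + p.2.2 = k ∧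
    (p.1 + p.2.1) * (p.1 + p.2.2) * (p.2.1 + p.2.2) ≠ 0 ∧
    p.1 ≠ 0 ∧ p.2.1 ≠ 0 ∧ p.2.2 ≠ 0

instance (k : ℤ) (p : ℤ × ℤ × ℤ) : Decidable (Cnd k p) := by
  unfold Cnd; infer_instance

noncomputable def FE (k : ℤ) (p : ℤ × ℤ × ℤ) : ℝ≥0∞ :=
  if Cnd k p then
    ENNReal.ofReal (1/(|((p.2.1+p.2.2:ℤ):ℝ)| * |((p.1+p.2.2:ℤ):ℝ)| *
      |((p.1+p.2.1:ℤ):ℝ)| * |((p.2.2:ℤ):ℝ)|))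
  else 0

noncomputable def uE (s t ε : ℝ) (a : ℤ → ℂ) (m : ℤ) : ℝ≥0∞ :=
  ENNReal.ofReal ((1 + (m:ℝ)^2)^(s/2)) *
    ENNReal.ofReal (Real.exp (-(t*ε*(m:ℝ)^2)) * norm (a m))

noncomputable def GE (s t ε : ℝ) (a b c : ℤ → ℂ) (k : ℤ) (p : ℤ × ℤ × ℤ) : ℝ≥0∞ :=
  if p.1 + p.2.1 + p.2.2 = k then
    uE s t ε a p.1 * uE s t ε b p.2.1 * uE s t ε c p.2.2
  else 0

lemma ofReal_sq (x : ℝ) (hx : 0 ≤ x) : ENNReal.ofReal (x^2) = ENNReal.ofReal x ^ 2 :=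
  ENNReal.ofReal_pow hx 2

lemma rpow_half_sq (x : ℝ) (hx : 0 < x) : (x ^ (s/2 : ℝ))^2 = x ^ (s : ℝ) := by
  rw [← Real.rpow_natCast (x ^ (s/2 : ℝ)) 2, ← Real.rpow_mul (le_of_lt hx)]
  norm_num

lemma exp_sq (y : ℝ) : Real.exp (-(2 * y)) = Real.exp (-y) ^ 2 := by
  rw [pow_two, ← Real.exp_add]
  ring_nf

lemma FE2 (k : ℤ) (p : ℤ × ℤ × ℤ) :
    FE k p = if p.1 + p.2.1 + p.2.2 = k ∧
       (p.1 + p.2.1) * (p.1 + p.2.2) * (p.2.1 + p.2.2) ≠ 0 ∧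
       p.1 ≠ 0 ∧ p.2.1 ≠ 0 ∧ p.2.2 ≠ 0 then
      ENNReal.ofReal (1/(|((p.2.1+p.2.2:ℤ):ℝ)| * |((p.1+p.2.2:ℤ):ℝ)| *
        |((p.1+p.2.1:ℤ):ℝ)| * |((p.2.2:ℤ):ℝ)|))
    else 0 := rfl

lemma GE2 (s t ε : ℝ) (a b c : ℤ → ℂ) (k : ℤ) (p : ℤ × ℤ × ℤ) :
    GE s t ε a b c k p = if p.1 + p.2.1 + p.2.2 = k then
      uE s t ε a p.1 * uE s t ε b p.2.1 * uE s t ε c p.2.2 else 0 := rfl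

lemma uE2 (s t ε : ℝ) (a : ℤ → ℂ) (m : ℤ) :
    uE s t ε a m = ENNReal.ofReal ((1 + (m:ℝ)^2)^(s/2)) *
      ENNReal.ofReal (Real.exp (-(t*ε*(m:ℝ)^2)) * norm (a m)) := rfl

lemma gE2 (n : ℤ) : gE n = ENNReal.ofReal (1/(n:ℝ)^2) := rfl

lemma Fsum_bound (N : ℝ) (hN : 1 ≤ N) (k : ℤ) (hk : N < |(k:ℝ)|) :
    ∑' p : ℤ × ℤ × ℤ, FE k p ^ 2 ≤ ENNReal.ofReal (4/N^2) * SE * SE := by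
  rw [← sum_g k (ENNReal.ofReal (4/N^2))]
  apply ENNReal.tsum_le_tsum
  intro p
  by_cases hcnd : p.1 + p.2.1 + p.2.2 = k ∧
       (p.1 + p.2.1) * (p.1 + p.2.2) * (p.2.1 + p.2.2) ≠ 0 ∧
       p.1 ≠ 0 ∧ p.2.1 ≠ 0 ∧ p.2.2 ≠ 0
  · obtain ⟨hsumeq, hprod, h1, h2, h3⟩ := hcnd
    have h12 : p.1 + p.2.1 ≠ 0 := fun h => hprod (by simp [h])
    have h13 : p.1 + p.2.2 ≠ 0 := fun h => hprod (by simp [h])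
    have h23 : p.2.1 + p.2.2 ≠ 0 := fun h => hprod (by simp [h])
    rw [FE2, if_pos ⟨hsumeq, hprod, h1, h2, h3⟩]
    have e1 : k - p.1 = p.2.1 + p.2.2 := by omega
    have e2 : k - p.2.1 = p.1 + p.2.2 := by omega
    rw [e1, e2, if_pos (by omega : p.2.2 = p.2.1 + p.2.2 - p.2.1), mul_one, gE2, gE2,
      ← ENNReal.ofReal_pow (by positivity), ← ENNReal.ofReal_mul (by positivity),
      ← ENNReal.ofReal_mul (by positivity)]
    refine ENNReal.ofReal_le_ofReal (le_trans
      (Fsq_bound N hN k p.1 p.2.1 p.2.2 hk hsumeq h12 h13 h23 h3) (le_of_eq (by ring)))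
  · rw [FE2, if_neg hcnd]
    simp

lemma step1 (s : ℝ) (hs : 0 ≤ s) (ε t N : ℝ) (hN : 1 ≤ N)
    (a b c : ℤ → ℂ) (ha : (Function.support a).Finite) (hb : (Function.support b).Finite)
    (hc : (Function.support c).Finite) (k : ℤ) (hk : N < |(k:ℝ)|) :
    ENNReal.ofReal ((1 + (k : ℝ) ^ 2) ^ s) *
      ENNReal.ofReal (Real.exp (-(2 * t * ε * (k : ℝ) ^ 2))) *
      ENNReal.ofReal (norm
        (∑' p : ℤ × ℤ × ℤ,
          if p.1 + p.2.1 + p.2.2 = k ∧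
             (p.1 + p.2.1) * (p.1 + p.2.2) * (p.2.1 + p.2.2) ≠ 0 ∧
             p.1 ≠ 0 ∧ p.2.1 ≠ 0 ∧ p.2.2 ≠ 0 then
            (k : ℂ) * ((p.1 + p.2.1 : ℤ) : ℂ) *
                Complex.exp (-(Complex.I * (t : ℂ) * Q2 ε k p.1 p.2.1 p.2.2)) /
                (Q1 ε k (p.1 + p.2.1) p.2.2 * Q2 ε k p.1 p.2.1 p.2.2) *
                a p.1 * b p.2.1 * c p.2.2
          else 0)) ^ 2
    ≤ ENNReal.ofReal (3^(s/2)/9) ^ 2 *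
        ((∑' p : ℤ × ℤ × ℤ, FE k p ^ 2) * (∑' p : ℤ × ℤ × ℤ, GE s t ε a b c k p ^ 2)) := by
  classical
  set f : ℤ × ℤ × ℤ → ℂ := fun p =>
    if p.1 + p.2.1 + p.2.2 = k ∧
       (p.1 + p.2.1) * (p.1 + p.2.2) * (p.2.1 + p.2.2) ≠ 0 ∧
       p.1 ≠ 0 ∧ p.2.1 ≠ 0 ∧ p.2.2 ≠ 0 then
      (k : ℂ) * ((p.1 + p.2.1 : ℤ) : ℂ) *
          Complex.exp (-(Complex.I * (t : ℂ) * Q2 ε k p.1 p.2.1 p.2.2)) /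
          (Q1 ε k (p.1 + p.2.1) p.2.2 * Q2 ε k p.1 p.2.1 p.2.2) *
          a p.1 * b p.2.1 * c p.2.2
    else 0 with hfdef
  have hk0 : k ≠ 0 := by
    rintro rfl
    rw [Int.cast_zero, abs_zero] at hk
    linarith
  have hsupp : (Function.support fun p : ℤ × ℤ × ℤ => norm (f p)).Finite := by
    apply Set.Finite.subset (ha.prod (hb.prod hc))
    intro p hp
    simp only [Function.mem_support, ne_eq] at hp
    have hne : ¬ (a p.1 = 0 ∨ b p.2.1 = 0 ∨ c p.2.2 = 0) := by
      intro h
      apply hp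
      rw [hfdef]
      simp only
      split
      · rcases h with h | h | h <;> simp [h]
      · simp
    push_neg at hne
    exact ⟨hne.1, hne.2.1, hne.2.2⟩
  have hsumm : Summable (fun p => norm (f p)) := summable_of_finite_support hsupp
  have habs : norm (∑' p, f p) ≤ ∑' p, norm (f p) := by
    have := norm_tsum_le_tsum_norm (f := f) (by simpa using hsumm)
    simpa using this
  have key : ENNReal.ofReal ((1 + (k:ℝ)^2)^(s/2)) * ENNReal.ofReal (Real.exp (-(t*ε*(k:ℝ)^2))) *
      ENNReal.ofReal (norm (∑' p, f p))
      ≤ ENNReal.ofReal (3^(s/2)/9) * ∑' p, FE k p * GE s t ε a b c k p := by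
    calc ENNReal.ofReal ((1 + (k:ℝ)^2)^(s/2)) * ENNReal.ofReal (Real.exp (-(t*ε*(k:ℝ)^2))) *
        ENNReal.ofReal (norm (∑' p, f p))
        ≤ ENNReal.ofReal ((1 + (k:ℝ)^2)^(s/2)) * ENNReal.ofReal (Real.exp (-(t*ε*(k:ℝ)^2))) *
          ENNReal.ofReal (∑' p, norm (f p)) := by
          gcongr
      _ = ∑' p, ENNReal.ofReal ((1 + (k:ℝ)^2)^(s/2)) *
            ENNReal.ofReal (Real.exp (-(t*ε*(k:ℝ)^2))) * ENNReal.ofReal (norm (f p)) := by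
          rw [ENNReal.ofReal_tsum_of_nonneg (fun p => norm_nonneg _) hsumm,
            ← ENNReal.tsum_mul_left]
      _ ≤ ∑' p, ENNReal.ofReal (3^(s/2)/9) * (FE k p * GE s t ε a b c k p) := by
          apply ENNReal.tsum_le_tsum
          intro p
          by_cases hcnd : p.1 + p.2.1 + p.2.2 = k ∧
             (p.1 + p.2.1) * (p.1 + p.2.2) * (p.2.1 + p.2.2) ≠ 0 ∧
             p.1 ≠ 0 ∧ p.2.1 ≠ 0 ∧ p.2.2 ≠ 0
          · obtain ⟨hsumeq, hprod, h1, h2, h3⟩ := hcnd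
            have h12 : p.1 + p.2.1 ≠ 0 := fun h => hprod (by simp [h])
            have h13 : p.1 + p.2.2 ≠ 0 := fun h => hprod (by simp [h])
            have h23 : p.2.1 + p.2.2 ≠ 0 := fun h => hprod (by simp [h])
            have hfp : f p = (k : ℂ) * ((p.1 + p.2.1 : ℤ) : ℂ) *
                Complex.exp (-(Complex.I * (t : ℂ) * Q2 ε k p.1 p.2.1 p.2.2)) /
                (Q1 ε k (p.1 + p.2.1) p.2.2 * Q2 ε k p.1 p.2.1 p.2.2) *
                a p.1 * b p.2.1 * c p.2.2 := by
              rw [hfdef]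
              exact if_pos ⟨hsumeq, hprod, h1, h2, h3⟩
            rw [hfp, FE2, GE2, if_pos ⟨hsumeq, hprod, h1, h2, h3⟩, if_pos hsumeq, uE2, uE2, uE2,
              ← ENNReal.ofReal_mul (by positivity), ← ENNReal.ofReal_mul (by positivity),
              ← ENNReal.ofReal_mul (by positivity), ← ENNReal.ofReal_mul (by positivity),
              ← ENNReal.ofReal_mul (by positivity), ← ENNReal.ofReal_mul (by positivity),
              ← ENNReal.ofReal_mul (by positivity), ← ENNReal.ofReal_mul (by positivity),
              ← ENNReal.ofReal_mul (by positivity)]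
            have hTB := term_bound s hs ε t k p.1 p.2.1 p.2.2 hk0 hsumeq h12 h13 h23 h3
              (a p.1) (b p.2.1) (c p.2.2)
            exact ENNReal.ofReal_le_ofReal (le_trans hTB (le_of_eq (by ring)))
          · have hfp : f p = 0 := by rw [hfdef]; exact if_neg hcnd
            rw [hfp, FE2, if_neg hcnd]
            simp
      _ = ENNReal.ofReal (3^(s/2)/9) * ∑' p, FE k p * GE s t ε a b c k p :=
          ENNReal.tsum_mul_left
  have hsq : ENNReal.ofReal ((1 + (k:ℝ)^2)^s) *
      ENNReal.ofReal (Real.exp (-(2 * t * ε * (k:ℝ)^2))) *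
      ENNReal.ofReal (norm (∑' p, f p)) ^ 2
      = (ENNReal.ofReal ((1 + (k:ℝ)^2)^(s/2)) * ENNReal.ofReal (Real.exp (-(t*ε*(k:ℝ)^2))) *
        ENNReal.ofReal (norm (∑' p, f p))) ^ 2 := by
    rw [mul_pow, mul_pow, ← ofReal_sq _ (by positivity), ← ofReal_sq _ (by positivity),
      rpow_half_sq _ (by positivity),
      show (2 * t * ε * (k:ℝ)^2) = 2 * (t * ε * (k:ℝ)^2) from by ring, exp_sq,
      ofReal_sq _ (Real.exp_nonneg _)]
  calc ENNReal.ofReal ((1 + (k:ℝ)^2)^s) *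
      ENNReal.ofReal (Real.exp (-(2 * t * ε * (k:ℝ)^2))) *
      ENNReal.ofReal (norm (∑' p, f p)) ^ 2
      = (ENNReal.ofReal ((1 + (k:ℝ)^2)^(s/2)) * ENNReal.ofReal (Real.exp (-(t*ε*(k:ℝ)^2))) *
        ENNReal.ofReal (norm (∑' p, f p))) ^ 2 := hsq
    _ ≤ (ENNReal.ofReal (3^(s/2)/9) * ∑' p, FE k p * GE s t ε a b c k p) ^ 2 :=
        pow_le_pow_left₀ zero_le key 2
    _ = ENNReal.ofReal (3^(s/2)/9) ^ 2 * (∑' p, FE k p * GE s t ε a b c k p) ^ 2 := by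
        rw [mul_pow]
    _ ≤ ENNReal.ofReal (3^(s/2)/9) ^ 2 *
        ((∑' p : ℤ × ℤ × ℤ, FE k p ^ 2) * (∑' p : ℤ × ℤ × ℤ, GE s t ε a b c k p ^ 2)) := by
        gcongr
        exact tsum_cs _ _

theorem stmt11 (s : ℝ) (hs : 0 ≤ s) :
    ∃ C : ℝ, 0 < C ∧
      ∀ ε : ℝ, ε ∈ Set.Ioc (0 : ℝ) 1 → ∀ t : ℝ, 0 ≤ t → ∀ N : ℝ, 1 ≤ N →
        ∀ a b c : ℤ → ℂ, (Function.support a).Finite → (Function.support b).Finite →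
          (Function.support c).Finite →
          (∑' k : ℤ,
            if N < |(k : ℝ)| then
              ENNReal.ofReal ((1 + (k : ℝ) ^ 2) ^ s) *
                ENNReal.ofReal (Real.exp (-(2 * t * ε * (k : ℝ) ^ 2))) *
                ENNReal.ofReal (norm
                  (∑' p : ℤ × ℤ × ℤ,
                    if p.1 + p.2.1 + p.2.2 = k ∧
                       (p.1 + p.2.1) * (p.1 + p.2.2) * (p.2.1 + p.2.2) ≠ 0 ∧
                       p.1 ≠ 0 ∧ p.2.1 ≠ 0 ∧ p.2.2 ≠ 0 then
                      (k : ℂ) * ((p.1 + p.2.1 : ℤ) : ℂ) *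
                          Complex.exp (-(Complex.I * (t : ℂ) * Q2 ε k p.1 p.2.1 p.2.2)) /
                          (Q1 ε k (p.1 + p.2.1) p.2.2 * Q2 ε k p.1 p.2.1 p.2.2) *
                          a p.1 * b p.2.1 * c p.2.2
                    else 0)) ^ 2
            else 0) ^ (1 / 2 : ℝ)
          ≤ ENNReal.ofReal C * ENNReal.ofReal N⁻¹ *
              HsE s (fun k =>
                ENNReal.ofReal (Real.exp (-(t * ε * (k : ℝ) ^ 2)) * norm (a k))) *
              HsE s (fun k =>
                ENNReal.ofReal (Real.exp (-(t * ε * (k : ℝ) ^ 2)) * norm (b k))) *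
              HsE s (fun k =>
                ENNReal.ofReal (Real.exp (-(t * ε * (k : ℝ) ^ 2)) * norm (c k))) := by
  classical
  have h3p : (0:ℝ) < 3^(s/2 : ℝ) := Real.rpow_pos_of_pos (by norm_num) _
  have hCpos : (0:ℝ) < 2 * 3^(s/2 : ℝ) * Sv / 9 :=
    div_pos (mul_pos (mul_pos two_pos h3p) Sv_pos) (by norm_num)
  refine ⟨2 * 3^(s/2 : ℝ) * Sv / 9, hCpos, ?_⟩
  intro ε hε t ht N hN a b c ha hb hc
  have hN0 : (0:ℝ) < N := lt_of_lt_of_le one_pos hN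
  set C : ℝ := 2 * 3^(s/2 : ℝ) * Sv / 9 with hCdef
  -- per-k bound
  have hker : ∀ k : ℤ,
      (if N < |(k : ℝ)| then
        ENNReal.ofReal ((1 + (k : ℝ) ^ 2) ^ s) *
          ENNReal.ofReal (Real.exp (-(2 * t * ε * (k : ℝ) ^ 2))) *
          ENNReal.ofReal (norm
            (∑' p : ℤ × ℤ × ℤ,
              if p.1 + p.2.1 + p.2.2 = k ∧
                 (p.1 + p.2.1) * (p.1 + p.2.2) * (p.2.1 + p.2.2) ≠ 0 ∧
                 p.1 ≠ 0 ∧ p.2.1 ≠ 0 ∧ p.2.2 ≠ 0 then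
                (k : ℂ) * ((p.1 + p.2.1 : ℤ) : ℂ) *
                    Complex.exp (-(Complex.I * (t : ℂ) * Q2 ε k p.1 p.2.1 p.2.2)) /
                    (Q1 ε k (p.1 + p.2.1) p.2.2 * Q2 ε k p.1 p.2.1 p.2.2) *
                    a p.1 * b p.2.1 * c p.2.2
              else 0)) ^ 2
      else 0)
      ≤ (ENNReal.ofReal (3^(s/2 : ℝ)/9) ^ 2 * (ENNReal.ofReal (4/N^2) * SE * SE)) *
          ∑' p : ℤ × ℤ × ℤ, GE s t ε a b c k p ^ 2 := by
    intro k
    split_ifs with hk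
    · calc _ ≤ ENNReal.ofReal (3^(s/2 : ℝ)/9) ^ 2 *
          ((∑' p : ℤ × ℤ × ℤ, FE k p ^ 2) * (∑' p : ℤ × ℤ × ℤ, GE s t ε a b c k p ^ 2)) :=
            step1 s hs ε t N hN a b c ha hb hc k hk
        _ ≤ ENNReal.ofReal (3^(s/2 : ℝ)/9) ^ 2 *
          ((ENNReal.ofReal (4/N^2) * SE * SE) * (∑' p : ℤ × ℤ × ℤ, GE s t ε a b c k p ^ 2)) := by
            gcongr
            exact Fsum_bound N hN k hk
        _ = _ := by ring
    · exact zero_le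
  -- sum of GE squares
  have hGG : ∑' k : ℤ, ∑' p : ℤ × ℤ × ℤ, GE s t ε a b c k p ^ 2
      = (∑' m : ℤ, uE s t ε a m ^ 2) * (∑' m : ℤ, uE s t ε b m ^ 2) *
        (∑' m : ℤ, uE s t ε c m ^ 2) := by
    have hsq : ∀ k (p : ℤ × ℤ × ℤ), GE s t ε a b c k p ^ 2
        = if p.1 + p.2.1 + p.2.2 = k then
            uE s t ε a p.1 ^ 2 * (uE s t ε b p.2.1 ^ 2 * uE s t ε c p.2.2 ^ 2) else 0 := by
      intro k p
      rw [GE2]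
      split
      · rw [mul_pow, mul_pow]; ring
      · simp
    calc ∑' k : ℤ, ∑' p : ℤ × ℤ × ℤ, GE s t ε a b c k p ^ 2
        = ∑' p : ℤ × ℤ × ℤ, ∑' k : ℤ, GE s t ε a b c k p ^ 2 := ENNReal.tsum_comm
      _ = ∑' p : ℤ × ℤ × ℤ, uE s t ε a p.1 ^ 2 * (uE s t ε b p.2.1 ^ 2 * uE s t ε c p.2.2 ^ 2) := by
          apply tsum_congr
          intro p
          simp only [hsq]
          exact tsum_delta_k _ _
      _ = (∑' m : ℤ, uE s t ε a m ^ 2) * (∑' m : ℤ, uE s t ε b m ^ 2) *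
          (∑' m : ℤ, uE s t ε c m ^ 2) := by
          have := tsum_triple (fun m => uE s t ε a m ^ 2) (fun m => uE s t ε b m ^ 2)
            (fun m => uE s t ε c m ^ 2)
          rw [← this]
          apply tsum_congr
          intro p
          ring
  -- the constant
  have hK2 : ENNReal.ofReal (3^(s/2 : ℝ)/9) ^ 2 * (ENNReal.ofReal (4/N^2) * SE * SE)
      = ENNReal.ofReal (C * N⁻¹) ^ 2 := by
    rw [SE_eq, ← ENNReal.ofReal_pow (by positivity), ← ENNReal.ofReal_mul (by positivity),
      ← ENNReal.ofReal_mul (mul_nonneg (by positivity) Sv_pos.le),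
      ← ENNReal.ofReal_mul (by positivity),
      ← ENNReal.ofReal_pow (mul_nonneg hCpos.le (inv_nonneg.mpr hN0.le))]
    congr 1
    rw [hCdef]
    field_simp
    ring
  -- HsE matching
  have hH : ∀ d : ℤ → ℂ,
      HsE s (fun k => ENNReal.ofReal (Real.exp (-(t * ε * (k : ℝ) ^ 2)) * norm (d k)))
      = (∑' m : ℤ, uE s t ε d m ^ 2) ^ (1/2 : ℝ) := by
    intro d
    unfold HsE
    congr 1
    apply tsum_congr
    intro k
    rw [uE2, mul_pow, ← rpow_half_sq (1 + (k:ℝ)^2) (by positivity),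
      ofReal_sq _ (by positivity)]
  -- final chain
  refine le_trans (ENNReal.rpow_le_rpow (ENNReal.tsum_le_tsum hker) (by norm_num)) ?_
  rw [ENNReal.tsum_mul_left, hGG, hK2]
  rw [ENNReal.mul_rpow_of_nonneg _ _ (by norm_num : (0:ℝ) ≤ 1/2),
    ENNReal.mul_rpow_of_nonneg _ _ (by norm_num : (0:ℝ) ≤ 1/2),
    ENNReal.mul_rpow_of_nonneg _ _ (by norm_num : (0:ℝ) ≤ 1/2),
    sq_rpow_half, hH a, hH b, hH c, ENNReal.ofReal_mul (le_of_lt hCpos)]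
  exact le_of_eq (by ring)
end

section
/- Let s ≥ 0. There exists a constant C = C(s) > 0 such that for all ε ∈ (0,1], all t ≥ 0, and all finitely supported sequences a, b, c : ℤ → ℂ, the sequence G defined by G_k = Σ k·(k1+k2)·exp(tε(k² − k1² − k2² − k3²))/Q1(k,k1+k2,k3)·a(k1)·b(k2)·c(k3), where the sum ranges over all (k1,k2,k3) ∈ Γ0(k) with k1 + k2 ≠ 0, k1 ≠ 0, k2 ≠ 0, k3 ≠ 0, and where Q1(k,m,n) = 3k·m·n + iε(k² − m² − n²) (for k = m + n), satisfies (Σ_{k∈ℤ} (1+k²)^s e^{−2tεk²} |G_k|²)^{1/2} ≤ C·‖(e^{−tεk²}a_k)_{k∈ℤ}‖_{H^s}·‖(e^{−tεk²}b_k)_{k∈ℤ}‖_{H^s}·‖(e^{−tεk²}c_k)_{k∈ℤ}‖_{H^s}. -/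
open scoped ENNReal NNReal
open MeasureTheory

lemma tsum_cs_s12 (f g : ℤ → ℝ≥0∞) :
    ∑' j : ℤ, f j * g j ≤ (∑' j : ℤ, f j ^ 2) ^ (1/2 : ℝ) * (∑' j : ℤ, g j ^ 2) ^ (1/2 : ℝ) := by
  have hpq : (2:ℝ).HolderConjugate 2 := by rw [Real.holderConjugate_iff]; constructor <;> norm_num
  have h := ENNReal.lintegral_mul_le_Lp_mul_Lq (Measure.count : Measure ℤ) hpq
    (measurable_of_countable f).aemeasurable (measurable_of_countable g).aemeasurable
  have h2 : ∀ x : ℝ≥0∞, x ^ (2:ℝ) = x ^ 2 := fun x => by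
    rw [← ENNReal.rpow_natCast x 2]; norm_num
  simpa [lintegral_count, h2, Pi.mul_apply] using h

lemma sq_add_le (x y : ℝ≥0∞) : (x + y) ^ 2 ≤ 3 * x ^ 2 + 3 * y ^ 2 := by
  have hxy : x * y ≤ x ^ 2 + y ^ 2 := by
    rcases le_total x y with h | h
    · calc x * y ≤ y * y := mul_le_mul_left h y
        _ = y ^ 2 := (sq y).symm
        _ ≤ x ^ 2 + y ^ 2 := le_add_self
    · calc x * y ≤ x * x := mul_le_mul_right h x
        _ = x ^ 2 := (sq x).symm
        _ ≤ x ^ 2 + y ^ 2 := le_self_add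
  calc (x + y) ^ 2 = x ^ 2 + y ^ 2 + 2 * (x * y) := by ring
    _ ≤ x ^ 2 + y ^ 2 + 2 * (x ^ 2 + y ^ 2) := by gcongr
    _ = 3 * x ^ 2 + 3 * y ^ 2 := by ring

lemma term_abs_le {ε t : ℝ} (hε : 0 < ε) (k k1 k2 k3 : ℤ) (hk : k1 + k2 + k3 = k)
    (hm : k1 + k2 ≠ 0) (hn : k3 ≠ 0) (z : ℂ) :
    norm ((k:ℂ) * ((k1 + k2 : ℤ):ℂ) *
        Complex.exp (((t*ε : ℝ):ℂ) * ((k:ℂ)^2 - (k1:ℂ)^2 - (k2:ℂ)^2 - (k3:ℂ)^2)) /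
        Q1 ε k (k1+k2) k3 * z)
      ≤ Real.exp (t*ε*((k:ℝ)^2 - (k1:ℝ)^2 - (k2:ℝ)^2 - (k3:ℝ)^2)) * norm z := by
  set m : ℤ := k1 + k2 with hm'
  have hkc : ((k:ℤ):ℂ) = (m:ℂ) + (k3:ℂ) := by push_cast [← hk]; ring
  have hQ : Q1 ε k m k3 = ((m:ℂ) * (k3:ℂ)) * (3*(k:ℂ) + 2*(ε:ℂ)*Complex.I) := by
    rw [Q1, hkc]; ring
  -- exp argument is real
  have hexp : norm (Complex.exp (((t*ε : ℝ):ℂ) *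
      ((k:ℂ)^2 - (k1:ℂ)^2 - (k2:ℂ)^2 - (k3:ℂ)^2)))
      = Real.exp (t*ε*((k:ℝ)^2 - (k1:ℝ)^2 - (k2:ℝ)^2 - (k3:ℝ)^2)) := by
    rw [show (((t*ε : ℝ):ℂ) * ((k:ℂ)^2 - (k1:ℂ)^2 - (k2:ℂ)^2 - (k3:ℂ)^2))
        = ((t*ε*((k:ℝ)^2 - (k1:ℝ)^2 - (k2:ℝ)^2 - (k3:ℝ)^2) : ℝ) : ℂ) by push_cast; ring]
    exact Complex.norm_exp_ofReal _
  rw [norm_mul, norm_div, norm_mul, hexp, hQ]; simp only [norm_mul]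
  have h1 : (1:ℝ) ≤ norm (m:ℂ) := by
    rw [Complex.norm_intCast]
    exact_mod_cast Int.one_le_abs hm
  have h3 : (1:ℝ) ≤ norm (k3:ℂ) := by
    rw [Complex.norm_intCast]
    exact_mod_cast Int.one_le_abs hn
  have hw : 3 * norm (k:ℂ) ≤ norm (3*(k:ℂ) + 2*(ε:ℂ)*Complex.I) := by
    have := Complex.abs_re_le_norm (3*(k:ℂ) + 2*(ε:ℂ)*Complex.I)
    simpa [Complex.add_re, Complex.mul_re, Complex.norm_intCast, abs_mul] using this
  -- numerator ≤ denominator for the k*m/Q1 part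
  have key : norm (k:ℂ) * norm (m:ℂ)
      ≤ norm (m:ℂ) * norm (k3:ℂ) * norm (3*(k:ℂ) + 2*(ε:ℂ)*Complex.I) := by
    calc norm (k:ℂ) * norm (m:ℂ)
        = norm (m:ℂ) * norm (k:ℂ) := mul_comm _ _
      _ ≤ norm (m:ℂ) * norm (k3:ℂ) * norm (3*(k:ℂ) + 2*(ε:ℂ)*Complex.I) := by
          rw [mul_assoc]
          refine mul_le_mul_of_nonneg_left ?_ (norm_nonneg _)
          calc norm (k:ℂ) ≤ 3 * norm (k:ℂ) := by
                nlinarith [norm_nonneg (k:ℂ)]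
            _ ≤ norm (3*(k:ℂ) + 2*(ε:ℂ)*Complex.I) := hw
            _ ≤ norm (k3:ℂ) * norm (3*(k:ℂ) + 2*(ε:ℂ)*Complex.I) := by
                nlinarith [norm_nonneg (3*(k:ℂ) + 2*(ε:ℂ)*Complex.I)]
  have hden : 0 ≤ norm (m:ℂ) * norm (k3:ℂ)
      * norm (3*(k:ℂ) + 2*(ε:ℂ)*Complex.I) := by positivity
  have hq : norm (k:ℂ) * norm (m:ℂ) /
      (norm (m:ℂ) * norm (k3:ℂ) * norm (3*(k:ℂ) + 2*(ε:ℂ)*Complex.I)) ≤ 1 :=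
    div_le_one_of_le₀ key hden
  set E := Real.exp (t*ε*((k:ℝ)^2 - (k1:ℝ)^2 - (k2:ℝ)^2 - (k3:ℝ)^2))
  have hE : 0 ≤ E := Real.exp_nonneg _
  calc norm (k:ℂ) * norm (m:ℂ) * E /
        (norm (m:ℂ) * norm (k3:ℂ) * norm (3*(k:ℂ) + 2*(ε:ℂ)*Complex.I)) *
        norm z
      = (norm (k:ℂ) * norm (m:ℂ) /
        (norm (m:ℂ) * norm (k3:ℂ) * norm (3*(k:ℂ) + 2*(ε:ℂ)*Complex.I))) *
        (E * norm z) := by ring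
    _ ≤ 1 * (E * norm z) := by
        refine mul_le_mul_of_nonneg_right hq (by positivity)
    _ = E * norm z := one_mul _

lemma tsum_case1 (k : ℤ) (A B C : ℤ → ℝ≥0∞) :
    (∑' p : ℤ × ℤ × ℤ, if p.2.1 = k ∧ p.2.2 = -p.1 then A p.1 * B p.2.1 * C p.2.2 else 0)
      = B k * ∑' j : ℤ, A j * C (-j) := by
  rw [ENNReal.tsum_prod']
  have hx : ∀ x : ℤ, (∑' q : ℤ × ℤ, if q.1 = k ∧ q.2 = -x then A x * B q.1 * C q.2 else 0)
      = A x * B k * C (-x) := by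
    intro x
    rw [ENNReal.tsum_prod']
    have hy : ∀ y : ℤ, (∑' z : ℤ, if y = k ∧ z = -x then A x * B y * C z else 0)
        = if y = k then A x * B y * C (-x) else 0 := by
      intro y
      rw [tsum_eq_single (-x) (fun z hz => if_neg (fun h => hz h.2))]
      by_cases hy : y = k <;> simp [hy]
    simp_rw [hy]
    rw [tsum_eq_single k (fun y hy => if_neg hy)]
    simp
  simp_rw [hx]
  rw [← ENNReal.tsum_mul_left]
  congr 1; ext x; ring

lemma tsum_case2 (k : ℤ) (A B C : ℤ → ℝ≥0∞) :
    (∑' p : ℤ × ℤ × ℤ, if p.1 = k ∧ p.2.2 = -p.2.1 then A p.1 * B p.2.1 * C p.2.2 else 0)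
      = A k * ∑' j : ℤ, B j * C (-j) := by
  rw [ENNReal.tsum_prod']
  have hx : ∀ x : ℤ, (∑' q : ℤ × ℤ, if x = k ∧ q.2 = -q.1 then A x * B q.1 * C q.2 else 0)
      = if x = k then A x * ∑' j : ℤ, B j * C (-j) else 0 := by
    intro x
    rw [ENNReal.tsum_prod']
    have hy : ∀ y : ℤ, (∑' z : ℤ, if x = k ∧ z = -y then A x * B y * C z else 0)
        = if x = k then A x * (B y * C (-y)) else 0 := by
      intro y
      rw [tsum_eq_single (-y) (fun z hz => if_neg (fun h => hz h.2))]
      by_cases hxk : x = k <;> simp [hxk, mul_assoc]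
    simp_rw [hy]
    by_cases hxk : x = k <;> simp [hxk, ENNReal.tsum_mul_left]
  simp_rw [hx]
  rw [tsum_eq_single k (fun x hx => if_neg hx)]
  simp

lemma ofReal_abs_tsum_le {ι : Type*} {F : ι → ℂ} (h : (Function.support F).Finite) :
    ENNReal.ofReal (norm (∑' p, F p)) ≤ ∑' p, ENNReal.ofReal (norm (F p)) := by
  have hs2 : Summable fun p => ‖F p‖₊ := by
    apply summable_of_finite_support
    apply h.subset
    intro p hp
    simp only [Function.mem_support, ne_eq] at hp ⊢
    exact fun h0 => hp (by simp [h0])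
  calc ENNReal.ofReal (norm (∑' p, F p)) = (‖∑' p, F p‖₊ : ℝ≥0∞) := by
        rw [ENNReal.ofReal, norm_toNNReal]
    _ ≤ (((∑' p, ‖F p‖₊) : ℝ≥0) : ℝ≥0∞) := ENNReal.coe_le_coe.2 (nnnorm_tsum_le hs2)
    _ = ∑' p, (‖F p‖₊ : ℝ≥0∞) := ENNReal.coe_tsum hs2
    _ = ∑' p, ENNReal.ofReal (norm (F p)) := by
        congr 1; ext p; rw [ENNReal.ofReal, norm_toNNReal]

lemma main_pointwise {ε t : ℝ} (hε : 0 < ε) (a b c : ℤ → ℂ)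
    (ha : (Function.support a).Finite) (hb : (Function.support b).Finite)
    (hc : (Function.support c).Finite) (k : ℤ) :
    ENNReal.ofReal (Real.exp (-(t * ε * (k : ℝ) ^ 2))) *
      ENNReal.ofReal (norm
        (∑' p : ℤ × ℤ × ℤ,
          if p.1 + p.2.1 + p.2.2 = k ∧
             (p.1 + p.2.1) * (p.1 + p.2.2) * (p.2.1 + p.2.2) = 0 ∧
             p.1 + p.2.1 ≠ 0 ∧ p.1 ≠ 0 ∧ p.2.1 ≠ 0 ∧ p.2.2 ≠ 0 then
            (k : ℂ) * ((p.1 + p.2.1 : ℤ) : ℂ) *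
                Complex.exp (((t * ε : ℝ) : ℂ) *
                  ((k : ℂ) ^ 2 - (p.1 : ℂ) ^ 2 - (p.2.1 : ℂ) ^ 2 - (p.2.2 : ℂ) ^ 2)) /
                Q1 ε k (p.1 + p.2.1) p.2.2 * a p.1 * b p.2.1 * c p.2.2
          else 0))
    ≤ (ENNReal.ofReal (Real.exp (-(t * ε * (k : ℝ) ^ 2)) * norm (b k))) *
        (∑' j : ℤ, ENNReal.ofReal (Real.exp (-(t * ε * (j : ℝ) ^ 2)) * norm (a j)) *
          ENNReal.ofReal (Real.exp (-(t * ε * ((-j : ℤ) : ℝ) ^ 2)) * norm (c (-j)))) +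
      (ENNReal.ofReal (Real.exp (-(t * ε * (k : ℝ) ^ 2)) * norm (a k))) *
        (∑' j : ℤ, ENNReal.ofReal (Real.exp (-(t * ε * (j : ℝ) ^ 2)) * norm (b j)) *
          ENNReal.ofReal (Real.exp (-(t * ε * ((-j : ℤ) : ℝ) ^ 2)) * norm (c (-j)))) := by
  set A : ℤ → ℝ≥0∞ := fun j => ENNReal.ofReal (Real.exp (-(t * ε * (j : ℝ) ^ 2)) * norm (a j)) with hA
  set B : ℤ → ℝ≥0∞ := fun j => ENNReal.ofReal (Real.exp (-(t * ε * (j : ℝ) ^ 2)) * norm (b j)) with hB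
  set C : ℤ → ℝ≥0∞ := fun j => ENNReal.ofReal (Real.exp (-(t * ε * (j : ℝ) ^ 2)) * norm (c j)) with hC
  set F : ℤ × ℤ × ℤ → ℂ := fun p =>
    if p.1 + p.2.1 + p.2.2 = k ∧
       (p.1 + p.2.1) * (p.1 + p.2.2) * (p.2.1 + p.2.2) = 0 ∧
       p.1 + p.2.1 ≠ 0 ∧ p.1 ≠ 0 ∧ p.2.1 ≠ 0 ∧ p.2.2 ≠ 0 then
      (k : ℂ) * ((p.1 + p.2.1 : ℤ) : ℂ) *
          Complex.exp (((t * ε : ℝ) : ℂ) *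
            ((k : ℂ) ^ 2 - (p.1 : ℂ) ^ 2 - (p.2.1 : ℂ) ^ 2 - (p.2.2 : ℂ) ^ 2)) /
          Q1 ε k (p.1 + p.2.1) p.2.2 * a p.1 * b p.2.1 * c p.2.2
    else 0 with hF
  have hsupp : (Function.support F).Finite := by
    apply (ha.prod (hb.prod hc)).subset
    intro p hp
    rw [Function.mem_support] at hp
    constructor
    · intro h0; apply hp; simp [hF, h0]
    constructor
    · intro h0; apply hp; simp [hF, h0]
    · intro h0; apply hp; simp [hF, h0]
  set T1 : ℤ × ℤ × ℤ → ℝ≥0∞ := fun p =>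
    if p.2.1 = k ∧ p.2.2 = -p.1 then A p.1 * B p.2.1 * C p.2.2 else 0 with hT1
  set T2 : ℤ × ℤ × ℤ → ℝ≥0∞ := fun p =>
    if p.1 = k ∧ p.2.2 = -p.2.1 then A p.1 * B p.2.1 * C p.2.2 else 0 with hT2
  have hpt : ∀ p : ℤ × ℤ × ℤ,
      ENNReal.ofReal (Real.exp (-(t * ε * (k : ℝ) ^ 2))) * ENNReal.ofReal (norm (F p))
        ≤ T1 p + T2 p := by
    intro p
    by_cases hcond : p.1 + p.2.1 + p.2.2 = k ∧
       (p.1 + p.2.1) * (p.1 + p.2.2) * (p.2.1 + p.2.2) = 0 ∧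
       p.1 + p.2.1 ≠ 0 ∧ p.1 ≠ 0 ∧ p.2.1 ≠ 0 ∧ p.2.2 ≠ 0
    · obtain ⟨hk, hprod, hm0, h1, h2, h3⟩ := hcond
      have hFp : F p = (k : ℂ) * ((p.1 + p.2.1 : ℤ) : ℂ) *
          Complex.exp (((t * ε : ℝ) : ℂ) *
            ((k : ℂ) ^ 2 - (p.1 : ℂ) ^ 2 - (p.2.1 : ℂ) ^ 2 - (p.2.2 : ℂ) ^ 2)) /
          Q1 ε k (p.1 + p.2.1) p.2.2 * (a p.1 * b p.2.1 * c p.2.2) := by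
        simp only [hF]; rw [if_pos ⟨hk, hprod, hm0, h1, h2, h3⟩]; ring
      have habs : norm (F p) ≤
          Real.exp (t*ε*((k:ℝ)^2 - (p.1:ℝ)^2 - (p.2.1:ℝ)^2 - (p.2.2:ℝ)^2)) *
            norm (a p.1 * b p.2.1 * c p.2.2) := by
        rw [hFp]
        exact term_abs_le hε k p.1 p.2.1 p.2.2 hk hm0 h3 _
      have hV : ENNReal.ofReal (Real.exp (-(t * ε * (k : ℝ) ^ 2))) *
          ENNReal.ofReal (norm (F p)) ≤ A p.1 * B p.2.1 * C p.2.2 := by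
        calc ENNReal.ofReal (Real.exp (-(t * ε * (k : ℝ) ^ 2))) *
              ENNReal.ofReal (norm (F p))
            ≤ ENNReal.ofReal (Real.exp (-(t * ε * (k : ℝ) ^ 2))) *
              ENNReal.ofReal (Real.exp (t*ε*((k:ℝ)^2 - (p.1:ℝ)^2 - (p.2.1:ℝ)^2 - (p.2.2:ℝ)^2)) *
                norm (a p.1 * b p.2.1 * c p.2.2)) := by
              exact mul_le_mul_right (ENNReal.ofReal_le_ofReal habs) _
          _ = A p.1 * B p.2.1 * C p.2.2 := by
              rw [hA, hB, hC]
              rw [← ENNReal.ofReal_mul (Real.exp_nonneg _)]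
              rw [← ENNReal.ofReal_mul (by positivity), ← ENNReal.ofReal_mul (by positivity)]
              congr 1
              rw [norm_mul, norm_mul]
              rw [show Real.exp (-(t * ε * (k : ℝ) ^ 2)) *
                  (Real.exp (t*ε*((k:ℝ)^2 - (p.1:ℝ)^2 - (p.2.1:ℝ)^2 - (p.2.2:ℝ)^2)) *
                    (norm (a p.1) * norm (b p.2.1) * norm (c p.2.2)))
                = (Real.exp (-(t * ε * (k : ℝ) ^ 2)) *
                    Real.exp (t*ε*((k:ℝ)^2 - (p.1:ℝ)^2 - (p.2.1:ℝ)^2 - (p.2.2:ℝ)^2))) *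
                    (norm (a p.1) * norm (b p.2.1) * norm (c p.2.2)) by ring]
              rw [← Real.exp_add]
              rw [show -(t * ε * (k : ℝ) ^ 2) +
                  t*ε*((k:ℝ)^2 - (p.1:ℝ)^2 - (p.2.1:ℝ)^2 - (p.2.2:ℝ)^2)
                = -(t * ε * ((p.1:ℤ) : ℝ) ^ 2) + (-(t * ε * ((p.2.1:ℤ) : ℝ) ^ 2) +
                    -(t * ε * ((p.2.2:ℤ) : ℝ) ^ 2)) by ring]
              rw [Real.exp_add, Real.exp_add]
              ring
      -- now V ≤ T1 p + T2 p
      have hsplit : (p.1 + p.2.2 = 0) ∨ (p.2.1 + p.2.2 = 0) := by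
        rcases mul_eq_zero.1 hprod with h | h
        · rcases mul_eq_zero.1 h with h' | h'
          · exact absurd h' hm0
          · exact Or.inl h'
        · exact Or.inr h
      rcases hsplit with h | h
      · have e1 : p.2.2 = -p.1 := by omega
        have e2 : p.2.1 = k := by omega
        have : T1 p = A p.1 * B p.2.1 * C p.2.2 := by simp only [hT1]; rw [if_pos ⟨e2, e1⟩]
        calc ENNReal.ofReal (Real.exp (-(t * ε * (k : ℝ) ^ 2))) *
              ENNReal.ofReal (norm (F p)) ≤ A p.1 * B p.2.1 * C p.2.2 := hV
          _ = T1 p := this.symm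
          _ ≤ T1 p + T2 p := le_self_add
      · have e1 : p.2.2 = -p.2.1 := by omega
        have e2 : p.1 = k := by omega
        have : T2 p = A p.1 * B p.2.1 * C p.2.2 := by simp only [hT2]; rw [if_pos ⟨e2, e1⟩]
        calc ENNReal.ofReal (Real.exp (-(t * ε * (k : ℝ) ^ 2))) *
              ENNReal.ofReal (norm (F p)) ≤ A p.1 * B p.2.1 * C p.2.2 := hV
          _ = T2 p := this.symm
          _ ≤ T1 p + T2 p := le_add_self
    · have : F p = 0 := by simp only [hF]; rw [if_neg hcond]
      simp [this]
  calc ENNReal.ofReal (Real.exp (-(t * ε * (k : ℝ) ^ 2))) *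
        ENNReal.ofReal (norm (∑' p, F p))
      ≤ ENNReal.ofReal (Real.exp (-(t * ε * (k : ℝ) ^ 2))) *
        ∑' p, ENNReal.ofReal (norm (F p)) :=
        mul_le_mul_right (ofReal_abs_tsum_le hsupp) _
    _ = ∑' p, ENNReal.ofReal (Real.exp (-(t * ε * (k : ℝ) ^ 2))) *
        ENNReal.ofReal (norm (F p)) := ENNReal.tsum_mul_left.symm
    _ ≤ ∑' p, (T1 p + T2 p) := ENNReal.tsum_le_tsum hpt
    _ = (∑' p, T1 p) + ∑' p, T2 p := ENNReal.tsum_add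
    _ = B k * (∑' j : ℤ, A j * C (-j)) + A k * (∑' j : ℤ, B j * C (-j)) := by
        rw [hT1, hT2, tsum_case1 k A B C, tsum_case2 k A B C]

lemma sqrt_sq (x : ℝ≥0∞) : (x ^ 2) ^ (1/2:ℝ) = x := by
  rw [← ENNReal.rpow_natCast x 2, ← ENNReal.rpow_mul]
  norm_num

lemma assembly (W A B C g : ℤ → ℝ≥0∞) (hW : ∀ k, 1 ≤ W k)
    (hg : ∀ k, g k ≤ B k * (∑' j : ℤ, A j * C (-j)) + A k * (∑' j : ℤ, B j * C (-j))) :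
    (∑' k : ℤ, W k * g k ^ 2) ^ (1/2:ℝ) ≤
      6 * ((∑' k : ℤ, W k * A k ^ 2) ^ (1/2:ℝ) *
        ((∑' k : ℤ, W k * B k ^ 2) ^ (1/2:ℝ) * (∑' k : ℤ, W k * C k ^ 2) ^ (1/2:ℝ))) := by
  set S1 := ∑' j : ℤ, A j * C (-j) with hS1'
  set S2 := ∑' j : ℤ, B j * C (-j) with hS2'
  set HA := (∑' k : ℤ, W k * A k ^ 2) ^ (1/2:ℝ) with hHA
  set HB := (∑' k : ℤ, W k * B k ^ 2) ^ (1/2:ℝ) with hHB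
  set HC := (∑' k : ℤ, W k * C k ^ 2) ^ (1/2:ℝ) with hHC
  have hN : ∀ D : ℤ → ℝ≥0∞, (∑' k : ℤ, D k ^ 2) ^ (1/2:ℝ) ≤
      (∑' k : ℤ, W k * D k ^ 2) ^ (1/2:ℝ) := by
    intro D
    apply ENNReal.rpow_le_rpow _ (by norm_num)
    apply ENNReal.tsum_le_tsum
    intro k
    calc D k ^ 2 = 1 * D k ^ 2 := (one_mul _).symm
      _ ≤ W k * D k ^ 2 := mul_le_mul_left (hW k) _
  have hCneg : (∑' j : ℤ, C (-j) ^ 2) = ∑' j : ℤ, C j ^ 2 :=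
    (Equiv.neg ℤ).tsum_eq (fun j => C j ^ 2)
  have hS1 : S1 ≤ HA * HC := by
    calc S1 ≤ (∑' j : ℤ, A j ^ 2) ^ (1/2:ℝ) * (∑' j : ℤ, C (-j) ^ 2) ^ (1/2:ℝ) :=
        tsum_cs_s12 A (fun j => C (-j))
      _ = (∑' j : ℤ, A j ^ 2) ^ (1/2:ℝ) * (∑' j : ℤ, C j ^ 2) ^ (1/2:ℝ) := by rw [hCneg]
      _ ≤ HA * HC := mul_le_mul' (hN A) (hN C)
  have hS2 : S2 ≤ HB * HC := by
    calc S2 ≤ (∑' j : ℤ, B j ^ 2) ^ (1/2:ℝ) * (∑' j : ℤ, C (-j) ^ 2) ^ (1/2:ℝ) :=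
        tsum_cs_s12 B (fun j => C (-j))
      _ = (∑' j : ℤ, B j ^ 2) ^ (1/2:ℝ) * (∑' j : ℤ, C j ^ 2) ^ (1/2:ℝ) := by rw [hCneg]
      _ ≤ HB * HC := mul_le_mul' (hN B) (hN C)
  have h3 : ((3:ℝ≥0∞)) ^ (1/2:ℝ) ≤ 3 := by
    calc (3:ℝ≥0∞) ^ (1/2:ℝ) ≤ (3:ℝ≥0∞) ^ (1:ℝ) :=
        ENNReal.rpow_le_rpow_of_exponent_le (by norm_num) (by norm_num)
      _ = 3 := ENNReal.rpow_one _
  calc (∑' k : ℤ, W k * g k ^ 2) ^ (1/2:ℝ)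
      ≤ (∑' k : ℤ, W k * (B k * S1 + A k * S2) ^ 2) ^ (1/2:ℝ) := by
        apply ENNReal.rpow_le_rpow _ (by norm_num)
        apply ENNReal.tsum_le_tsum
        intro k
        exact mul_le_mul_right (pow_le_pow_left' (hg k) 2) _
    _ ≤ (∑' k : ℤ, (3 * S1 ^ 2 * (W k * B k ^ 2) + 3 * S2 ^ 2 * (W k * A k ^ 2))) ^ (1/2:ℝ) := by
        apply ENNReal.rpow_le_rpow _ (by norm_num)
        apply ENNReal.tsum_le_tsum
        intro k
        calc W k * (B k * S1 + A k * S2) ^ 2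
            ≤ W k * (3 * (B k * S1) ^ 2 + 3 * (A k * S2) ^ 2) :=
              mul_le_mul_right (sq_add_le _ _) _
          _ = 3 * S1 ^ 2 * (W k * B k ^ 2) + 3 * S2 ^ 2 * (W k * A k ^ 2) := by ring
    _ = (3 * S1 ^ 2 * (∑' k : ℤ, W k * B k ^ 2) +
          3 * S2 ^ 2 * (∑' k : ℤ, W k * A k ^ 2)) ^ (1/2:ℝ) := by
        rw [ENNReal.tsum_add, ENNReal.tsum_mul_left, ENNReal.tsum_mul_left]
    _ ≤ (3 * S1 ^ 2 * (∑' k : ℤ, W k * B k ^ 2)) ^ (1/2:ℝ) +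
          (3 * S2 ^ 2 * (∑' k : ℤ, W k * A k ^ 2)) ^ (1/2:ℝ) :=
        ENNReal.rpow_add_le_add_rpow _ _ (by norm_num) (by norm_num)
    _ = (3:ℝ≥0∞) ^ (1/2:ℝ) * S1 * HB + (3:ℝ≥0∞) ^ (1/2:ℝ) * S2 * HA := by
        rw [ENNReal.mul_rpow_of_nonneg _ _ (by norm_num : (0:ℝ) ≤ 1/2),
            ENNReal.mul_rpow_of_nonneg _ _ (by norm_num : (0:ℝ) ≤ 1/2),
            ENNReal.mul_rpow_of_nonneg _ _ (by norm_num : (0:ℝ) ≤ 1/2),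
            ENNReal.mul_rpow_of_nonneg _ _ (by norm_num : (0:ℝ) ≤ 1/2),
            sqrt_sq, sqrt_sq, hHA, hHB]
    _ ≤ 3 * (HA * HC) * HB + 3 * (HB * HC) * HA := by
        have g1 : (3:ℝ≥0∞) ^ (1/2:ℝ) * S1 * HB ≤ 3 * (HA * HC) * HB :=
          mul_le_mul_left (mul_le_mul' h3 hS1) HB
        have g2 : (3:ℝ≥0∞) ^ (1/2:ℝ) * S2 * HA ≤ 3 * (HB * HC) * HA :=
          mul_le_mul_left (mul_le_mul' h3 hS2) HA
        exact add_le_add g1 g2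
    _ = 6 * (HA * (HB * HC)) := by ring


theorem stmt12 (s : ℝ) (hs : 0 ≤ s) :
    ∃ C : ℝ, 0 < C ∧
      ∀ ε : ℝ, ε ∈ Set.Ioc (0 : ℝ) 1 → ∀ t : ℝ, 0 ≤ t →
        ∀ a b c : ℤ → ℂ, (Function.support a).Finite → (Function.support b).Finite →
          (Function.support c).Finite →
          (∑' k : ℤ,
            ENNReal.ofReal ((1 + (k : ℝ) ^ 2) ^ s) *
              ENNReal.ofReal (Real.exp (-(2 * t * ε * (k : ℝ) ^ 2))) *
              ENNReal.ofReal (norm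
                (∑' p : ℤ × ℤ × ℤ,
                  if p.1 + p.2.1 + p.2.2 = k ∧
                     (p.1 + p.2.1) * (p.1 + p.2.2) * (p.2.1 + p.2.2) = 0 ∧
                     p.1 + p.2.1 ≠ 0 ∧ p.1 ≠ 0 ∧ p.2.1 ≠ 0 ∧ p.2.2 ≠ 0 then
                    (k : ℂ) * ((p.1 + p.2.1 : ℤ) : ℂ) *
                        Complex.exp (((t * ε : ℝ) : ℂ) *
                          ((k : ℂ) ^ 2 - (p.1 : ℂ) ^ 2 - (p.2.1 : ℂ) ^ 2 - (p.2.2 : ℂ) ^ 2)) /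
                        Q1 ε k (p.1 + p.2.1) p.2.2 * a p.1 * b p.2.1 * c p.2.2
                  else 0)) ^ 2) ^ (1 / 2 : ℝ)
          ≤ ENNReal.ofReal C *
              HsE s (fun k =>
                ENNReal.ofReal (Real.exp (-(t * ε * (k : ℝ) ^ 2)) * norm (a k))) *
              HsE s (fun k =>
                ENNReal.ofReal (Real.exp (-(t * ε * (k : ℝ) ^ 2)) * norm (b k))) *
              HsE s (fun k =>
                ENNReal.ofReal (Real.exp (-(t * ε * (k : ℝ) ^ 2)) * norm (c k))) := by
  refine ⟨6, by norm_num, ?_⟩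
  intro ε hε t ht a b c ha hb hc
  have hε0 : 0 < ε := hε.1
  set A : ℤ → ℝ≥0∞ := fun k =>
    ENNReal.ofReal (Real.exp (-(t * ε * (k : ℝ) ^ 2)) * norm (a k)) with hA
  set B : ℤ → ℝ≥0∞ := fun k =>
    ENNReal.ofReal (Real.exp (-(t * ε * (k : ℝ) ^ 2)) * norm (b k)) with hB
  set C : ℤ → ℝ≥0∞ := fun k =>
    ENNReal.ofReal (Real.exp (-(t * ε * (k : ℝ) ^ 2)) * norm (c k)) with hC
  set W : ℤ → ℝ≥0∞ := fun k => ENNReal.ofReal ((1 + (k : ℝ) ^ 2) ^ s) with hW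
  set g : ℤ → ℝ≥0∞ := fun k =>
    ENNReal.ofReal (Real.exp (-(t * ε * (k : ℝ) ^ 2))) *
      ENNReal.ofReal (norm
        (∑' p : ℤ × ℤ × ℤ,
          if p.1 + p.2.1 + p.2.2 = k ∧
             (p.1 + p.2.1) * (p.1 + p.2.2) * (p.2.1 + p.2.2) = 0 ∧
             p.1 + p.2.1 ≠ 0 ∧ p.1 ≠ 0 ∧ p.2.1 ≠ 0 ∧ p.2.2 ≠ 0 then
            (k : ℂ) * ((p.1 + p.2.1 : ℤ) : ℂ) *
                Complex.exp (((t * ε : ℝ) : ℂ) *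
                  ((k : ℂ) ^ 2 - (p.1 : ℂ) ^ 2 - (p.2.1 : ℂ) ^ 2 - (p.2.2 : ℂ) ^ 2)) /
                Q1 ε k (p.1 + p.2.1) p.2.2 * a p.1 * b p.2.1 * c p.2.2
          else 0)) with hg
  have hW1 : ∀ k : ℤ, 1 ≤ W k := by
    intro k
    rw [hW]
    simp only
    rw [show (1:ℝ≥0∞) = ENNReal.ofReal 1 by simp]
    exact ENNReal.ofReal_le_ofReal
      (Real.one_le_rpow (by nlinarith [sq_nonneg ((k:ℤ):ℝ)]) hs)
  have hgle : ∀ k : ℤ, g k ≤ B k * (∑' j : ℤ, A j * C (-j)) +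
      A k * (∑' j : ℤ, B j * C (-j)) := fun k =>
    main_pointwise hε0 a b c ha hb hc k
  have hmain := assembly W A B C g hW1 hgle
  have heq : ∀ k : ℤ,
      W k * ENNReal.ofReal (Real.exp (-(2 * t * ε * (k : ℝ) ^ 2))) *
        ENNReal.ofReal (norm
          (∑' p : ℤ × ℤ × ℤ,
            if p.1 + p.2.1 + p.2.2 = k ∧
               (p.1 + p.2.1) * (p.1 + p.2.2) * (p.2.1 + p.2.2) = 0 ∧
               p.1 + p.2.1 ≠ 0 ∧ p.1 ≠ 0 ∧ p.2.1 ≠ 0 ∧ p.2.2 ≠ 0 then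
              (k : ℂ) * ((p.1 + p.2.1 : ℤ) : ℂ) *
                  Complex.exp (((t * ε : ℝ) : ℂ) *
                    ((k : ℂ) ^ 2 - (p.1 : ℂ) ^ 2 - (p.2.1 : ℂ) ^ 2 - (p.2.2 : ℂ) ^ 2)) /
                  Q1 ε k (p.1 + p.2.1) p.2.2 * a p.1 * b p.2.1 * c p.2.2
            else 0)) ^ 2
      = W k * g k ^ 2 := by
    intro k
    have e1 : Real.exp (-(t * ε * (k : ℝ) ^ 2)) ^ 2
        = Real.exp (-(2 * t * ε * (k : ℝ) ^ 2)) := by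
      rw [sq, ← Real.exp_add]; ring_nf
    rw [hg]
    simp only
    rw [mul_pow, ← ENNReal.ofReal_pow (Real.exp_nonneg _), e1]
    ring
  calc (∑' k : ℤ,
        W k * ENNReal.ofReal (Real.exp (-(2 * t * ε * (k : ℝ) ^ 2))) *
          ENNReal.ofReal (norm
            (∑' p : ℤ × ℤ × ℤ,
              if p.1 + p.2.1 + p.2.2 = k ∧
                 (p.1 + p.2.1) * (p.1 + p.2.2) * (p.2.1 + p.2.2) = 0 ∧
                 p.1 + p.2.1 ≠ 0 ∧ p.1 ≠ 0 ∧ p.2.1 ≠ 0 ∧ p.2.2 ≠ 0 then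
                (k : ℂ) * ((p.1 + p.2.1 : ℤ) : ℂ) *
                    Complex.exp (((t * ε : ℝ) : ℂ) *
                      ((k : ℂ) ^ 2 - (p.1 : ℂ) ^ 2 - (p.2.1 : ℂ) ^ 2 - (p.2.2 : ℂ) ^ 2)) /
                    Q1 ε k (p.1 + p.2.1) p.2.2 * a p.1 * b p.2.1 * c p.2.2
              else 0)) ^ 2) ^ (1 / 2 : ℝ)
      = (∑' k : ℤ, W k * g k ^ 2) ^ (1 / 2 : ℝ) := by
        congr 1
        exact tsum_congr heq
    _ ≤ 6 * ((∑' k : ℤ, W k * A k ^ 2) ^ (1/2:ℝ) *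
          ((∑' k : ℤ, W k * B k ^ 2) ^ (1/2:ℝ) * (∑' k : ℤ, W k * C k ^ 2) ^ (1/2:ℝ))) := hmain
    _ = ENNReal.ofReal 6 * HsE s A * HsE s B * HsE s C := by
        have h6 : (6:ℝ≥0∞) = ENNReal.ofReal 6 := by
          rw [show (6:ℝ) = ((6:ℕ):ℝ) by norm_num, ENNReal.ofReal_natCast]; norm_num
        have hH : ∀ D : ℤ → ℝ≥0∞, (∑' k : ℤ, W k * D k ^ 2) ^ (1/2:ℝ) = HsE s D := by
          intro D
          simp only [HsE, hW]
        rw [hH A, hH B, hH C, h6]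
        ring
end
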